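/- Fix a positive integer n. There exists a constant C = C(n) > 0 such that for every d ∈ {1,2}, every nonnegative half-integer Q, and every s ∈ ℂ with 0 ≤ Re(s) ≤ n satisfying Q ≥ 3n + 2 or |Im(s)| ≥ 1, one has |Γ((d/2)(Q + 1/2 − s))| ≤ C · |Q + 3/2 + s|² · |Γ((d/2)(Q + 1/2 + s))|. (Under the stated hypotheses neither (d/2)(Q + 1/2 − s) nor (d/2)(Q + 1/2 + s) is a nonpositive integer, so both Gamma values are finite and the right-hand Gamma value is nonzero.) -/

import Mathlib

open Complex Real Set MeasureTheory

lemma aux_gamma_lb {θ : ℝ} (h0 : 0 < θ) (h1 : θ ≤ 1) : (1/2 : ℝ) ≤ Real.Gamma (θ + 1) := by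
  set t := θ + 1 with ht
  have ht1 : 1 < t := by simp [ht]; linarith
  have ht2 : t ≤ 2 := by simp [ht]; linarith
  have hΓ2 : Real.Gamma 2 = 1 := by
    rw [show (2:ℝ) = (1:ℕ)+1 by norm_num, Real.Gamma_nat_eq_factorial]; norm_num
  have hΓ3 : Real.Gamma 3 = 2 := by
    rw [show (3:ℝ) = (2:ℕ)+1 by norm_num, Real.Gamma_nat_eq_factorial]; norm_num
  rcases eq_or_lt_of_le ht2 with h2 | h2
  · rw [h2, hΓ2]; norm_num
  · set lam := 1 / (3 - t) with hlam
    have h3t : 1 < 3 - t := by linarith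
    have hlam0 : 0 < lam := by positivity
    have hlamhalf : 1/2 ≤ lam := by
      rw [hlam, le_div_iff₀ (by linarith)]; linarith
    have hlam1 : lam ≤ 1 := by
      rw [hlam, div_le_one (by linarith)]; linarith
    have hconv := Real.convexOn_log_Gamma.2 (show t ∈ Ioi (0:ℝ) by simp; linarith)
      (show (3:ℝ) ∈ Ioi (0:ℝ) by norm_num) hlam0.le (by linarith : (0:ℝ) ≤ 1 - lam)
      (by ring)
    have hcomb : lam * t + (1 - lam) * 3 = 2 := by
      have hm : lam * (3 - t) = 1 := by
        rw [hlam]; exact one_div_mul_cancel (by linarith : (0:ℝ) < 3 - t).ne'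
      linear_combination -hm
    simp only [smul_eq_mul] at hconv
    rw [hcomb] at hconv
    simp only [Function.comp_apply, hΓ2, hΓ3, Real.log_one] at hconv
    have h2pos : (0:ℝ) ≤ Real.log 2 := Real.log_nonneg one_le_two
    have hL : -Real.log 2 ≤ Real.log (Real.Gamma t) := by nlinarith
    have := Real.exp_le_exp.2 hL
    rwa [Real.exp_neg, Real.exp_log two_pos, Real.exp_log (Real.Gamma_pos_of_pos (by linarith)),
      ← one_div] at this

lemma aux_beta_bound {v : ℂ} (hv : 1 ≤ v.re) {θ : ℝ} (h0 : 0 < θ) :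
    ‖Complex.betaIntegral v (θ:ℂ)‖ ≤ 1/θ := by
  have hint : IntervalIntegrable (fun x : ℝ => (1 - x) ^ (θ - 1)) volume 0 1 := by
    have := (intervalIntegral.intervalIntegrable_rpow' (a := 0) (b := 1)
      (show (-1:ℝ) < θ - 1 by linarith)).comp_sub_left 1
    simpa using this.symm
  have hbound : ∀ᵐ t : ℝ ∂volume.restrict (Set.uIoc (0:ℝ) 1),
      ‖(t : ℂ) ^ (v - 1) * (1 - (t : ℂ)) ^ ((θ:ℂ) - 1)‖ ≤ (1 - t) ^ (θ - 1) := by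
    rw [Set.uIoc_of_le (zero_le_one' ℝ)]
    filter_upwards [ae_restrict_mem measurableSet_Ioc] with x hx
    rw [norm_mul]
    have h1 : ‖(x : ℂ) ^ (v - 1)‖ ≤ 1 := by
      rw [Complex.norm_cpow_eq_rpow_re_of_pos hx.1]
      exact Real.rpow_le_one hx.1.le hx.2 (by simpa using hv)
    have h2 : ‖(1 - (x : ℂ)) ^ ((θ:ℂ) - 1)‖ = (1 - x) ^ (θ - 1) := by
      rcases eq_or_lt_of_le hx.2 with h | h
      · subst h
        rcases eq_or_ne θ 1 with hθ | hθ
        · simp [hθ]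
        · have hne : ((θ:ℂ) - 1) ≠ 0 := by
            simpa [sub_eq_zero] using fun hc => hθ (by exact_mod_cast hc)
          simp [sub_self, Complex.zero_cpow hne, Real.zero_rpow (sub_ne_zero.2 hθ)]
      · have hpos : (0:ℝ) < 1 - x := by linarith
        rw [show (1 - (x:ℂ)) = ((1 - x : ℝ) : ℂ) by push_cast; ring,
          Complex.norm_cpow_eq_rpow_re_of_pos hpos]
        norm_num
    calc ‖(x : ℂ) ^ (v - 1)‖ * ‖(1 - (x : ℂ)) ^ ((θ:ℂ) - 1)‖
        ≤ 1 * ((1 - x) ^ (θ - 1)) := by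
          rw [h2]
          exact mul_le_mul_of_nonneg_right h1 (Real.rpow_nonneg (by linarith [hx.2]) _)
      _ = (1 - x) ^ (θ - 1) := one_mul _
  have := intervalIntegral.norm_integral_le_abs_of_norm_le hbound hint
  rw [Complex.betaIntegral]
  refine this.trans ?_
  have hval : (∫ x in (0:ℝ)..1, (1 - x) ^ (θ - 1)) = 1/θ := by
    have h := intervalIntegral.integral_comp_sub_left (a := (0:ℝ)) (b := 1)
      (fun y : ℝ => y ^ (θ - 1)) 1
    simp only [sub_zero, sub_self] at h
    rw [h, integral_rpow (Or.inl (by linarith))]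
    rw [Real.one_rpow, Real.zero_rpow (by linarith), sub_add_cancel]
    norm_num
  rw [hval, abs_of_pos (by positivity)]

lemma aux_gamma_step {v : ℂ} (hv : 1 ≤ v.re) {θ : ℝ} (h0 : 0 < θ) (h1 : θ ≤ 1) :
    ‖Complex.Gamma v‖ ≤ 2 * ‖Complex.Gamma (v + θ)‖ := by
  have hrel := Complex.Gamma_mul_Gamma_eq_betaIntegral (s := v) (t := (θ:ℂ))
    (by linarith) (by simpa using h0)
  have hΓθpos : 0 < Real.Gamma θ := Real.Gamma_pos_of_pos h0
  have key : ‖Complex.Gamma v‖ * Real.Gamma θ ≤ ‖Complex.Gamma (v + θ)‖ * (1/θ) := by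
    have h := congrArg norm hrel
    rw [norm_mul, norm_mul, Complex.Gamma_ofReal, Complex.norm_real,
      Real.norm_eq_abs, abs_of_pos hΓθpos] at h
    rw [h]
    exact mul_le_mul_of_nonneg_left (aux_beta_bound hv h0) (norm_nonneg _)
  have hhalf : (1/2 : ℝ) ≤ θ * Real.Gamma θ := by
    have := aux_gamma_lb h0 h1
    rwa [Real.Gamma_add_one h0.ne'] at this
  have key2 : ‖Complex.Gamma v‖ * (θ * Real.Gamma θ) ≤ ‖Complex.Gamma (v + θ)‖ := by
    calc ‖Complex.Gamma v‖ * (θ * Real.Gamma θ)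
        = (‖Complex.Gamma v‖ * Real.Gamma θ) * θ := by ring
      _ ≤ (‖Complex.Gamma (v + θ)‖ * (1/θ)) * θ := mul_le_mul_of_nonneg_right key h0.le
      _ = ‖Complex.Gamma (v + θ)‖ := by field_simp
  have h3 := mul_le_mul_of_nonneg_left hhalf (norm_nonneg (Complex.Gamma v))
  linarith

lemma aux_shift (u : ℂ) (k : ℕ) (h : ∀ j : ℕ, j < k → (1/2:ℝ) ≤ ‖u + j‖) :
    ‖Complex.Gamma u‖ ≤ 2^k * ‖Complex.Gamma (u + k)‖ := by
  induction k with
  | zero => simp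
  | succ m ih =>
    have hum : (1/2:ℝ) ≤ ‖u + m‖ := h m (by omega)
    have hne : u + m ≠ 0 := by
      intro hc; rw [hc] at hum; norm_num at hum
    have hrec : Complex.Gamma (u + ((m:ℕ)+1:ℕ)) = (u + m) * Complex.Gamma (u + m) := by
      have h2 := Complex.Gamma_add_one (u + m) hne
      rw [← h2]; push_cast; ring_nf
    have hstep : ‖Complex.Gamma (u + m)‖ ≤ 2 * ‖Complex.Gamma (u + ((m:ℕ)+1:ℕ))‖ := by
      rw [hrec, norm_mul]
      nlinarith [norm_nonneg (Complex.Gamma (u + m))]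
    calc ‖Complex.Gamma u‖ ≤ 2^m * ‖Complex.Gamma (u + m)‖ :=
          ih (fun j hj => h j (by omega))
      _ ≤ 2^m * (2 * ‖Complex.Gamma (u + ((m:ℕ)+1:ℕ))‖) := by
          exact mul_le_mul_of_nonneg_left hstep (by positivity)
      _ = 2^(m+1) * ‖Complex.Gamma (u + ((m:ℕ)+1:ℕ))‖ := by ring

set_option maxHeartbeats 1000000 in
/-- Uniform bound for the ratio of Gamma factors on the strip
`0 ≤ Re s ≤ n`, provided `Q ≥ 3n+2` or `|s.im| ≥ 1`. -/
theorem stmt_1 (n : ℕ) (hn : 0 < n) :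
    ∃ C : ℝ, 0 < C ∧
      ∀ (d : ℕ), (d = 1 ∨ d = 2) →
      ∀ (Q : ℝ), (∃ m : ℕ, Q = m / 2) →
      ∀ s : ℂ, 0 ≤ s.re → s.re ≤ (n : ℝ) →
        (3 * (n : ℝ) + 2 ≤ Q ∨ 1 ≤ |s.im|) →
        ‖Complex.Gamma ((d : ℂ) / 2 * ((Q : ℂ) + 1/2 - s))‖ ≤
          C * ‖(Q : ℂ) + 3/2 + s‖ ^ 2 *
            ‖Complex.Gamma ((d : ℂ) / 2 * ((Q : ℂ) + 1/2 + s))‖ := by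
  refine ⟨(2:ℝ)^(2*n+4), by positivity, ?_⟩
  rintro d hd Q ⟨m, hQm⟩ s hs0 hsn hcase
  have hQ0 : 0 ≤ Q := by rw [hQm]; positivity
  set A : ℝ := (d:ℝ)/2 with hA
  have hA1 : A ≤ 1 := by rcases hd with h | h <;> (rw [hA, h]; norm_num)
  have hA2 : (1/2:ℝ) ≤ A := by rcases hd with h | h <;> (rw [hA, h]; norm_num)
  have hcast : ((d:ℂ)/2) = (A:ℂ) := by rw [hA]; push_cast; ring
  rw [hcast]
  obtain ⟨z, hz⟩ : ∃ z : ℂ, z = (A:ℂ) * ((Q:ℂ) + 1/2 + s) := ⟨_, rfl⟩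
  obtain ⟨w, hw⟩ : ∃ w : ℂ, w = (A:ℂ) * ((Q:ℂ) + 1/2 - s) := ⟨_, rfl⟩
  obtain ⟨T, hT⟩ : ∃ T : ℝ, T = ‖(Q:ℂ) + 3/2 + s‖ := ⟨_, rfl⟩
  rw [← hz, ← hw, ← hT]
  have hzre : z.re = A * (Q + 1/2 + s.re) := by
    rw [hz]; simp [Complex.add_re, Complex.add_im]; try ring
  have hzim : z.im = A * s.im := by
    rw [hz]; simp
  obtain ⟨x, hxdef⟩ : ∃ x : ℝ, x = 2 * A * s.re := ⟨_, rfl⟩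
  have hx0 : 0 ≤ x := by rw [hxdef]; positivity
  have hx2n : x ≤ 2*n := by
    rw [hxdef]
    have h1 : A * s.re ≤ 1 * (n:ℝ) :=
      mul_le_mul hA1 hsn hs0 zero_le_one
    linarith
  obtain ⟨u, hu⟩ : ∃ u : ℂ, u = z - (x:ℂ) := ⟨_, rfl⟩
  -- ‖Γ w‖ = ‖Γ u‖
  have hconj : (starRingEnd ℂ) w = u := by
    apply Complex.ext
    · simp [hu, hw, hzre, hxdef, Complex.add_re, Complex.sub_re]; try ring
    · simp [hu, hw, hzim, Complex.add_im, Complex.sub_im]; try ring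
  have hwu : ‖Complex.Gamma w‖ = ‖Complex.Gamma u‖ := by
    rw [← hconj, Complex.Gamma_conj]
    exact (RCLike.norm_conj _).symm
  obtain ⟨k, hk⟩ : ∃ k : ℕ, k = ⌈x⌉₊ + 1 := ⟨_, rfl⟩
  have hkx : x + 1 ≤ (k:ℝ) := by
    rw [hk]; push_cast; linarith [Nat.le_ceil x]
  have hxk : (k:ℝ) < x + 2 := by
    rw [hk]; push_cast; linarith [Nat.ceil_lt_add_one hx0]
  have hk2n : k ≤ 2*n+1 := by
    rw [hk]
    have : ⌈x⌉₊ ≤ 2*n := Nat.ceil_le.2 (by exact_mod_cast hx2n)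
    omega
  -- step 1 hypothesis
  have hure : u.re = A * (Q + 1/2 - s.re) := by
    simp [hu, hzre, hxdef, Complex.sub_re]; ring
  have huim : u.im = A * s.im := by simp [hu, hzim, Complex.sub_im]
  have step1 : ∀ j : ℕ, j < k → (1/2:ℝ) ≤ ‖u + (j:ℂ)‖ := by
    intro j hj
    rcases hcase with hQbig | him
    · have h1 : (1/2:ℝ) ≤ (u + (j:ℂ)).re := by
        have : (u + (j:ℂ)).re = u.re + j := by simp [Complex.add_re]
        rw [this, hure]
        have hb : (1:ℝ) ≤ Q + 1/2 - s.re := by linarith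
        nlinarith [Nat.cast_nonneg (α := ℝ) j]
      calc (1/2:ℝ) ≤ (u + (j:ℂ)).re := h1
        _ ≤ |(u + (j:ℂ)).re| := le_abs_self _
        _ ≤ ‖u + (j:ℂ)‖ := Complex.abs_re_le_norm _
    · have h1 : (1/2:ℝ) ≤ |(u + (j:ℂ)).im| := by
        have : (u + (j:ℂ)).im = A * s.im := by simp [Complex.add_im, huim]
        rw [this, abs_mul, _root_.abs_of_nonneg (by linarith : (0:ℝ) ≤ A)]
        nlinarith
      exact h1.trans (Complex.abs_im_le_norm _)
  have hshift := aux_shift u k step1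
  obtain ⟨δ, hδ⟩ : ∃ δ : ℝ, δ = (k:ℝ) - x := ⟨_, rfl⟩
  have hδ1 : 1 ≤ δ := by rw [hδ]; linarith
  have hδ2 : δ < 2 := by rw [hδ]; linarith
  have huk : u + (k:ℂ) = z + (δ:ℂ) := by rw [hu, hδ]; push_cast; ring
  obtain ⟨θ, hθ⟩ : ∃ θ : ℝ, θ = 2 - δ := ⟨_, rfl⟩
  have hθ0 : 0 < θ := by rw [hθ]; linarith
  have hθ1 : θ ≤ 1 := by rw [hθ]; linarith
  have hzre0 : 0 < z.re := by
    rw [hzre]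
    exact mul_pos (by linarith) (by linarith)
  have hzdre : 1 ≤ (z + (δ:ℂ)).re := by
    have : (z + (δ:ℂ)).re = z.re + δ := by simp [Complex.add_re]
    rw [this]; linarith
  have hstep2 := aux_gamma_step hzdre hθ0 hθ1
  have hsum : z + (δ:ℂ) + (θ:ℂ) = z + 2 := by rw [hθ]; push_cast; ring
  rw [hsum] at hstep2
  have hz0 : z ≠ 0 := fun hc => by rw [hc] at hzre0; simp at hzre0
  have hz1 : z + 1 ≠ 0 := fun hc => by
    have : (z+1).re = z.re + 1 := by simp [Complex.add_re]
    rw [hc] at this; simp at this; linarith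
  have hG2 : Complex.Gamma (z + 2) = (z + 1) * (z * Complex.Gamma z) := by
    rw [show z + 2 = (z + 1) + 1 by ring, Complex.Gamma_add_one _ hz1,
      Complex.Gamma_add_one _ hz0]
  -- norm estimates
  have hT32 : (3/2:ℝ) ≤ T := by
    have h1 : ((Q:ℂ) + 3/2 + s).re = Q + 3/2 + s.re := by simp [Complex.add_re]
    calc (3/2:ℝ) ≤ ((Q:ℂ) + 3/2 + s).re := by rw [h1]; linarith
      _ ≤ |((Q:ℂ) + 3/2 + s).re| := le_abs_self _
      _ ≤ T := by rw [hT]; exact Complex.abs_re_le_norm _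
  have hznorm : ‖z‖ ≤ T + 1 := by
    have h1 : ‖(Q:ℂ) + 1/2 + s‖ ≤ T + 1 := by
      have he : (Q:ℂ) + 1/2 + s = ((Q:ℂ) + 3/2 + s) - 1 := by ring
      rw [he]
      calc ‖((Q:ℂ) + 3/2 + s) - 1‖ ≤ ‖(Q:ℂ) + 3/2 + s‖ + ‖(1:ℂ)‖ := norm_sub_le _ _
        _ = T + 1 := by rw [hT]; norm_num
    have h2 : ‖(A:ℂ)‖ ≤ 1 := by
      rw [Complex.norm_real, Real.norm_eq_abs, _root_.abs_of_nonneg (by linarith)]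
      exact hA1
    calc ‖z‖ = ‖(A:ℂ)‖ * ‖(Q:ℂ) + 1/2 + s‖ := by rw [hz, norm_mul]
      _ ≤ 1 * (T + 1) := mul_le_mul h2 h1 (norm_nonneg _) zero_le_one
      _ = T + 1 := one_mul _
  have hz1norm : ‖z + 1‖ ≤ T + 2 := by
    calc ‖z + 1‖ ≤ ‖z‖ + ‖(1:ℂ)‖ := norm_add_le _ _
      _ ≤ (T + 1) + 1 := by rw [norm_one]; linarith
      _ = T + 2 := by ring
  -- final chain
  have hGz2norm : ‖Complex.Gamma (z + 2)‖ ≤ (T+2) * ((T+1) * ‖Complex.Gamma z‖) := by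
    rw [hG2, norm_mul, norm_mul]
    have h1 : ‖z‖ * ‖Complex.Gamma z‖ ≤ (T+1) * ‖Complex.Gamma z‖ :=
      mul_le_mul_of_nonneg_right hznorm (norm_nonneg _)
    have h2 : (0:ℝ) ≤ ‖z‖ * ‖Complex.Gamma z‖ := by positivity
    calc ‖z+1‖ * (‖z‖ * ‖Complex.Gamma z‖) ≤ (T+2) * (‖z‖ * ‖Complex.Gamma z‖) :=
          mul_le_mul_of_nonneg_right hz1norm h2
      _ ≤ (T+2) * ((T+1) * ‖Complex.Gamma z‖) := mul_le_mul_of_nonneg_left h1 (by linarith)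
  have hpowk : (2:ℝ)^k ≤ 2^(2*n+1) := by
    apply pow_le_pow_right₀ (by norm_num) hk2n
  have hfinal : ‖Complex.Gamma w‖ ≤ (2:ℝ)^(2*n+4) * T^2 * ‖Complex.Gamma z‖ := by
    rw [hwu]
    calc ‖Complex.Gamma u‖ ≤ 2^k * ‖Complex.Gamma (u + k)‖ := hshift
      _ = 2^k * ‖Complex.Gamma (z + (δ:ℂ))‖ := by rw [huk]
      _ ≤ 2^k * (2 * ‖Complex.Gamma (z + 2)‖) :=
          mul_le_mul_of_nonneg_left hstep2 (by positivity)
      _ ≤ 2^k * (2 * ((T+2) * ((T+1) * ‖Complex.Gamma z‖))) := by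
          apply mul_le_mul_of_nonneg_left _ (by positivity : (0:ℝ) ≤ 2^k)
          exact mul_le_mul_of_nonneg_left hGz2norm (by norm_num)
      _ ≤ 2^(2*n+1) * (2 * ((T+2) * ((T+1) * ‖Complex.Gamma z‖))) := by
          apply mul_le_mul_of_nonneg_right hpowk
          positivity
      _ ≤ (2:ℝ)^(2*n+4) * T^2 * ‖Complex.Gamma z‖ := by
          have hTn : (0:ℝ) ≤ ‖Complex.Gamma z‖ := norm_nonneg _
          have hq : (2:ℝ)^(2*n+1) * (2 * ((T+2) * (T+1))) ≤ (2:ℝ)^(2*n+4) * T^2 := by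
            have he : (2:ℝ)^(2*n+4) = (2:ℝ)^(2*n+1) * 8 := by
              rw [show 2*n+4 = (2*n+1)+3 by ring, pow_add]; norm_num
            rw [he]
            have h8 : 2 * ((T+2) * (T+1)) ≤ 8 * T^2 := by nlinarith
            nlinarith [pow_pos (show (0:ℝ) < 2 by norm_num) (2*n+1)]
          nlinarith
  exact hfinal
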